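/- arXiv:1606.06648 — 3 statements merged into one kernel-verified Lean document; each statement's English description precedes it below -/
import Mathlib

section
/- If (r,s) is a best rank-one approximation of a real p×q matrix R with r⊗s ≠ 0, then (r,s) maximizes the normalized correlation with R: for all u ∈ ℝ^p, v ∈ ℝ^q with u⊗v ≠ 0, one has ⟨R, u⊗v⟩_F / ‖u⊗v‖_F ≤ ⟨R, r⊗s⟩_F / ‖r⊗s‖_F. -/
open Matrix Filter Topology

noncomputable section

/-- The Frobenius inner product `⟨A,B⟩_F = trace(Aᵀ B)` on real `p × q` matrices. -/
def frobInner {p q : ℕ} (A B : Matrix (Fin p) (Fin q) ℝ) : ℝ := (Aᵀ * B).trace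

/-- The Frobenius norm. -/
def frobNorm {p q : ℕ} (A : Matrix (Fin p) (Fin q) ℝ) : ℝ := Real.sqrt (frobInner A A)

/-- The rank-one matrix `r ⊗ s` with entries `(r ⊗ s)_{ij} = r i * s j`. -/
def tensor {p q : ℕ} (r : EuclideanSpace ℝ (Fin p)) (s : EuclideanSpace ℝ (Fin q)) :
    Matrix (Fin p) (Fin q) ℝ := Matrix.of fun i j => r i * s j
lemma frobInner_eq {p q : ℕ} (A B : Matrix (Fin p) (Fin q) ℝ) :
    frobInner A B = ∑ i, ∑ j, A i j * B i j := by
  simp [frobInner, Matrix.trace, Matrix.mul_apply, Matrix.diag]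
  exact Finset.sum_comm

lemma frobInner_comm {p q : ℕ} (A B : Matrix (Fin p) (Fin q) ℝ) :
    frobInner A B = frobInner B A := by
  simp [frobInner_eq, mul_comm]

lemma frobInner_sub_left {p q : ℕ} (A B C : Matrix (Fin p) (Fin q) ℝ) :
    frobInner (A - B) C = frobInner A C - frobInner B C := by
  simp [frobInner_eq, Matrix.sub_apply, sub_mul, Finset.sum_sub_distrib]

lemma frobInner_sub_right {p q : ℕ} (A B C : Matrix (Fin p) (Fin q) ℝ) :
    frobInner A (B - C) = frobInner A B - frobInner A C := by
  simp [frobInner_eq, Matrix.sub_apply, mul_sub, Finset.sum_sub_distrib]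

lemma frobInner_smul_right {p q : ℕ} (t : ℝ) (A B : Matrix (Fin p) (Fin q) ℝ) :
    frobInner A (t • B) = t * frobInner A B := by
  simp [frobInner_eq, Matrix.smul_apply, Finset.mul_sum, mul_left_comm]

lemma frobInner_smul_left {p q : ℕ} (t : ℝ) (A B : Matrix (Fin p) (Fin q) ℝ) :
    frobInner (t • A) B = t * frobInner A B := by
  rw [frobInner_comm, frobInner_smul_right, frobInner_comm]

lemma frobInner_self_nonneg {p q : ℕ} (A : Matrix (Fin p) (Fin q) ℝ) :
    0 ≤ frobInner A A := by
  rw [frobInner_eq]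
  exact Finset.sum_nonneg fun i _ => Finset.sum_nonneg fun j _ => mul_self_nonneg _

lemma frobInner_self_pos {p q : ℕ} {A : Matrix (Fin p) (Fin q) ℝ} (h : A ≠ 0) :
    0 < frobInner A A := by
  rcases lt_or_eq_of_le (frobInner_self_nonneg A) with h' | h'
  · exact h'
  exfalso; apply h
  ext i j
  rw [frobInner_eq] at h'
  have h1 : ∀ i ∈ Finset.univ, (0:ℝ) ≤ ∑ j, A i j * A i j :=
    fun i _ => Finset.sum_nonneg fun j _ => mul_self_nonneg _
  have h2 := (Finset.sum_eq_zero_iff_of_nonneg h1).mp h'.symm i (Finset.mem_univ i)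
  have h3 : ∀ j ∈ Finset.univ, (0:ℝ) ≤ A i j * A i j := fun j _ => mul_self_nonneg _
  have h4 := (Finset.sum_eq_zero_iff_of_nonneg h3).mp h2 j (Finset.mem_univ j)
  simpa [mul_self_eq_zero] using h4

lemma tensor_smul_left {p q : ℕ} (t : ℝ) (u : EuclideanSpace ℝ (Fin p))
    (v : EuclideanSpace ℝ (Fin q)) : tensor (t • u) v = t • tensor u v := by
  ext i j
  simp [tensor, mul_assoc]

lemma frobInner_expand {p q : ℕ} (R B : Matrix (Fin p) (Fin q) ℝ) :
    frobInner (R - B) (R - B)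
      = frobInner R R - 2 * frobInner R B + frobInner B B := by
  rw [frobInner_sub_left, frobInner_sub_right, frobInner_sub_right,
    frobInner_comm B R]
  ring

/-- A best rank-one approximation `(r,s)` of `R` with `r⊗s ≠ 0` maximizes the
normalized correlation with `R`. -/
theorem stmt_3 {p q : ℕ} (hp : 1 ≤ p) (hq : 1 ≤ q) (R : Matrix (Fin p) (Fin q) ℝ)
    (r : EuclideanSpace ℝ (Fin p)) (s : EuclideanSpace ℝ (Fin q))
    (hbest : ∀ (u : EuclideanSpace ℝ (Fin p)) (v : EuclideanSpace ℝ (Fin q)),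
      frobNorm (R - tensor r s) ≤ frobNorm (R - tensor u v))
    (hne : tensor r s ≠ 0) :
    ∀ (u : EuclideanSpace ℝ (Fin p)) (v : EuclideanSpace ℝ (Fin q)), tensor u v ≠ 0 →
      frobInner R (tensor u v) / frobNorm (tensor u v)
        ≤ frobInner R (tensor r s) / frobNorm (tensor r s) := by
  -- key inequality: comparing squared norms after scaling
  have key : ∀ (t : ℝ) (u : EuclideanSpace ℝ (Fin p)) (v : EuclideanSpace ℝ (Fin q)),
      frobInner (R - tensor r s) (R - tensor r s)
        ≤ frobInner R R - 2 * t * frobInner R (tensor u v)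
          + t ^ 2 * frobInner (tensor u v) (tensor u v) := by
    intro t u v
    have h1 := hbest (t • u) v
    have hX := frobInner_self_nonneg (R - tensor r s)
    have hY := frobInner_self_nonneg (R - tensor (t • u) v)
    have h2 : frobInner (R - tensor r s) (R - tensor r s)
        ≤ frobInner (R - tensor (t • u) v) (R - tensor (t • u) v) := by
      have s1 := Real.sq_sqrt hX
      have s2 := Real.sq_sqrt hY
      have n1 := Real.sqrt_nonneg (frobInner (R - tensor r s) (R - tensor r s))
      unfold frobNorm at h1
      nlinarith [h1]
    calc frobInner (R - tensor r s) (R - tensor r s)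
        ≤ frobInner (R - tensor (t • u) v) (R - tensor (t • u) v) := h2
      _ = frobInner R R - 2 * t * frobInner R (tensor u v)
          + t ^ 2 * frobInner (tensor u v) (tensor u v) := by
          rw [frobInner_expand, tensor_smul_left]
          simp only [frobInner_smul_left, frobInner_smul_right]
          ring
  set A := frobInner (tensor r s) (tensor r s) with hA
  set B := frobInner R (tensor r s) with hB
  have hApos : 0 < A := frobInner_self_pos hne
  have hexp : frobInner (R - tensor r s) (R - tensor r s) = frobInner R R - 2 * B + A :=
    frobInner_expand R (tensor r s)
  have hBA : B = A := by
    have h1 := key (B / A) r s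
    rw [hexp] at h1
    have hA0 : A ≠ 0 := ne_of_gt hApos
    rw [← hB, ← hA] at h1
    field_simp at h1
    have h2 : (A - B) ^ 2 ≤ 0 := by nlinarith [mul_pos hApos hApos]
    have h3 : (A - B) ^ 2 = 0 := le_antisymm h2 (sq_nonneg _)
    have h4 : A - B = 0 := by
      exact pow_eq_zero_iff (two_ne_zero) |>.mp h3
    linarith
  intro u v huv
  set a := frobInner (tensor u v) (tensor u v) with ha
  set b := frobInner R (tensor u v) with hb
  have hapos : 0 < a := frobInner_self_pos huv
  have hkey := key (b / a) u v
  rw [hexp, hBA] at hkey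
  have ha0 : a ≠ 0 := ne_of_gt hapos
  have hb2 : b ^ 2 ≤ a * A := by
    rw [← hb, ← ha] at hkey
    field_simp at hkey
    nlinarith [hkey, mul_pos hapos hapos, hapos]
  -- now conclude
  have hsa : Real.sqrt a ^ 2 = a := Real.sq_sqrt hapos.le
  have hsA : Real.sqrt A ^ 2 = A := Real.sq_sqrt hApos.le
  have hsa' : 0 < Real.sqrt a := Real.sqrt_pos.mpr hapos
  have hsA' : 0 < Real.sqrt A := Real.sqrt_pos.mpr hApos
  show b / frobNorm (tensor u v) ≤ B / frobNorm (tensor r s)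
  unfold frobNorm
  rw [hBA, div_le_div_iff₀ hsa' hsA']
  rcases le_or_gt b 0 with hbneg | hbpos
  · have h6 : b * Real.sqrt A ≤ 0 := mul_nonpos_of_nonpos_of_nonneg hbneg hsA'.le
    nlinarith [mul_pos hApos hsa']
  · have h5 : (b * Real.sqrt A) ^ 2 ≤ (A * Real.sqrt a) ^ 2 := by
      rw [mul_pow, mul_pow, hsa, hsA]
      nlinarith [mul_le_mul_of_nonneg_right hb2 hApos.le]
    have hsum : 0 < A * Real.sqrt a + b * Real.sqrt A := by positivity
    nlinarith [h5, hsum]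


end
end

section
/- Summability of the fixed-point PGD corrections: if 3Mκ < 1, then along any fixed-point PGD sequence one has Σ_{n≥0} ‖r_{n+1}⊗s_{n+1}‖_F² ≤ ‖b − g₀ − Ã(g₀)‖_F² / (1 − 3Mκ); in particular ‖r_n⊗s_n‖_F → 0 as n → ∞. -/
open Matrix Filter Topology

noncomputable section

/-- The tensorized operator `Ã(g) = Σ_{μ} A_μ g B_μᵀ`. -/
def Atil {p q M : ℕ} (A : Fin M → Matrix (Fin p) (Fin p) ℝ)
    (B : Fin M → Matrix (Fin q) (Fin q) ℝ)
    (g : Matrix (Fin p) (Fin q) ℝ) : Matrix (Fin p) (Fin q) ℝ :=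
  ∑ μ, A μ * g * (B μ)ᵀ
open RealInnerProductSpace

namespace PGDAux
variable {p q : ℕ}

lemma frobNorm_nonneg (g : Matrix (Fin p) (Fin q) ℝ) : 0 ≤ frobNorm g := Real.sqrt_nonneg _

def embL (p q : ℕ) : Matrix (Fin p) (Fin q) ℝ →ₗ[ℝ] EuclideanSpace ℝ (Fin p × Fin q) where
  toFun g := WithLp.toLp 2 (fun ij : Fin p × Fin q => g ij.1 ij.2)
  map_add' _ _ := rfl
  map_smul' _ _ := rfl

@[simp] lemma embL_apply (g : Matrix (Fin p) (Fin q) ℝ) (ij : Fin p × Fin q) :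
    (embL p q g) ij = g ij.1 ij.2 := rfl

lemma inner_embL (g h : Matrix (Fin p) (Fin q) ℝ) :
    ⟪embL p q g, embL p q h⟫ = frobInner g h := by
  simp [PiLp.inner_apply, RCLike.inner_apply, frobInner, Matrix.trace, Matrix.mul_apply,
    Matrix.diag, Fintype.sum_prod_type, embL_apply]
  rw [Finset.sum_comm]
  exact Finset.sum_congr rfl fun _ _ => Finset.sum_congr rfl fun _ _ => mul_comm _ _

lemma norm_embL (g : Matrix (Fin p) (Fin q) ℝ) : ‖embL p q g‖ = frobNorm g := by
  rw [frobNorm, ← inner_embL, real_inner_self_eq_norm_sq, Real.sqrt_sq (norm_nonneg _)]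

lemma tensor_smul_left (c : ℝ) (u : EuclideanSpace ℝ (Fin p)) (v : EuclideanSpace ℝ (Fin q)) :
    tensor (c • u) v = c • tensor u v := by
  funext i j; show (c • u) i * v j = c * (u i * v j); simp [mul_assoc]

lemma tensor_add_left (u u' : EuclideanSpace ℝ (Fin p)) (v : EuclideanSpace ℝ (Fin q)) :
    tensor (u + u') v = tensor u v + tensor u' v := by
  funext i j; show (u + u') i * v j = u i * v j + u' i * v j
  simp [add_mul]

lemma tensor_add_right (u : EuclideanSpace ℝ (Fin p)) (v v' : EuclideanSpace ℝ (Fin q)) :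
    tensor u (v + v') = tensor u v + tensor u v' := by
  funext i j; show u i * (v + v') j = u i * v j + u i * v' j
  simp [mul_add]

lemma tensor_smul_right (c : ℝ) (u : EuclideanSpace ℝ (Fin p)) (v : EuclideanSpace ℝ (Fin q)) :
    tensor u (c • v) = c • tensor u v := by
  funext i j; show u i * (c • v) j = c * (u i * v j); simp; ring

lemma frobInner_tensor (a c : EuclideanSpace ℝ (Fin p)) (b d : EuclideanSpace ℝ (Fin q)) :
    frobInner (tensor a b) (tensor c d) = ⟪a, c⟫ * ⟪b, d⟫ := by
  rw [← inner_embL]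
  simp only [LinearMap.coe_mk, AddHom.coe_mk, PiLp.inner_apply, RCLike.inner_apply,
    conj_trivial, tensor, Matrix.of_apply, Fintype.sum_prod_type, Finset.sum_mul_sum,
    WithLp.ofLp_toLp, embL_apply]
  refine Finset.sum_congr rfl fun i _ => Finset.sum_congr rfl fun j _ => by ring

lemma norm_tensor (a : EuclideanSpace ℝ (Fin p)) (b : EuclideanSpace ℝ (Fin q)) :
    frobNorm (tensor a b) = ‖a‖ * ‖b‖ := by
  rw [frobNorm, frobInner_tensor, real_inner_self_eq_norm_sq, real_inner_self_eq_norm_sq,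
    ← mul_pow, Real.sqrt_sq (by positivity)]

lemma mul_tensor (C : Matrix (Fin p) (Fin p) ℝ) (D : Matrix (Fin q) (Fin q) ℝ)
    (u : EuclideanSpace ℝ (Fin p)) (v : EuclideanSpace ℝ (Fin q)) :
    C * tensor u v * Dᵀ = tensor (WithLp.toLp 2 (C.mulVec u)) (WithLp.toLp 2 (D.mulVec v)) := by
  funext i j
  show (C * tensor u v * Dᵀ) i j = (C.mulVec u) i * (D.mulVec v) j
  simp [Matrix.mul_apply, tensor, Matrix.mulVec, dotProduct, Finset.sum_mul, Finset.mul_sum]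
  congr 1; funext l; congr 1; funext k; ring

lemma orth_of_min {V : Type*} [NormedAddCommGroup V] [InnerProductSpace ℝ V]
    (x y : V) (h : ∀ ε : ℝ, ‖x‖ ≤ ‖x - ε • y‖) : ⟪x, y⟫ = 0 := by
  set a := ⟪x, y⟫ with ha
  set B := ‖y‖ ^ 2 with hB
  have hBnn : 0 ≤ B := by positivity
  have key : ∀ ε : ℝ, 0 ≤ ε ^ 2 * B - 2 * ε * a := by
    intro ε
    have h1 : ‖x‖ ^ 2 ≤ ‖x - ε • y‖ ^ 2 := by
      have := h ε; nlinarith [norm_nonneg x, norm_nonneg (x - ε • y)]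
    rw [norm_sub_sq_real, real_inner_smul_right, norm_smul] at h1
    simp only [Real.norm_eq_abs, mul_pow, sq_abs] at h1
    nlinarith
  have hk := key (a / (B + 1))
  have hB1 : (0:ℝ) < B + 1 := by linarith
  have hc : (0:ℝ) < (B+1)^2 := by positivity
  have e : (a/(B+1))^2 * B - 2*(a/(B+1))*a = (a^2*B - 2*a^2*(B+1))/(B+1)^2 := by
    field_simp
  rw [e] at hk
  have h3 : 0 ≤ a^2*B - 2*a^2*(B+1) := by
    have := mul_nonneg hk hc.le
    rwa [div_mul_cancel₀ _ (ne_of_gt hc)] at this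
  have ha2 : a^2 = 0 := le_antisymm (by nlinarith [sq_nonneg a]) (sq_nonneg a)
  exact pow_eq_zero_iff two_ne_zero |>.mp ha2

set_option maxHeartbeats 1600000 in
lemma key_step {M : ℕ} (A : Fin M → Matrix (Fin p) (Fin p) ℝ)
    (B : Fin M → Matrix (Fin q) (Fin q) ℝ) (κ : ℝ) (hκ0 : 0 ≤ κ)
    (hκ : ∀ (μ : Fin M) (g : Matrix (Fin p) (Fin q) ℝ),
      frobNorm (A μ * g * (B μ)ᵀ) ≤ κ * frobNorm g)
    (hMκ1 : (M:ℝ) * κ ≤ 1)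
    (R0 : Matrix (Fin p) (Fin q) ℝ) (r : EuclideanSpace ℝ (Fin p))
    (s : EuclideanSpace ℝ (Fin q))
    (hbest : ∀ u v, frobNorm (R0 - tensor r s) ≤ frobNorm (R0 - tensor u v)) :
    frobNorm (R0 - tensor r s - Atil A B (tensor r s)) ^ 2
      ≤ frobNorm R0 ^ 2 - (1 - 3 * M * κ) * frobNorm (tensor r s) ^ 2 := by
  set τ := frobNorm (tensor r s) with hτ
  clear_value τ
  have hτ0 : 0 ≤ τ := hτ ▸ Real.sqrt_nonneg _
  set R := embL p q R0 with hR
  set T := embL p q (tensor r s) with hT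
  clear_value R T
  obtain ⟨x, hx⟩ : ∃ y, y = R - T := ⟨_, rfl⟩
  have hTnorm : ‖T‖ = τ := by rw [hT, norm_embL, ← hτ]
  have hb : ∀ u v, ‖x‖ ≤ ‖R - embL p q (tensor u v)‖ := by
    intro u v
    have h0 := hbest u v
    rw [← norm_embL, ← norm_embL, map_sub, map_sub, ← hR, ← hT, ← hx] at h0
    exact h0
  -- Step A : orthogonality ⟪x, T⟫ = 0
  have hxT : ⟪x, T⟫ = 0 := by
    apply orth_of_min
    intro ε
    have h1 := hb ((1 + ε) • r) s
    have h2 : R - embL p q (tensor ((1+ε) • r) s) = x - ε • T := by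
      rw [tensor_smul_left, _root_.map_smul, ← hT, hx]; module
    rwa [h2] at h1
  -- Step B : partial orthogonality
  have hrv : ∀ v' : EuclideanSpace ℝ (Fin q), ⟪x, embL p q (tensor r v')⟫ = 0 := by
    intro v'
    apply orth_of_min
    intro ε
    have h1 := hb r (s + ε • v')
    have h2 : R - embL p q (tensor r (s + ε • v')) = x - ε • embL p q (tensor r v') := by
      rw [tensor_add_right, tensor_smul_right, map_add, _root_.map_smul, ← hT, hx]; module
    rwa [h2] at h1
  have hus : ∀ u' : EuclideanSpace ℝ (Fin p), ⟪x, embL p q (tensor u' s)⟫ = 0 := by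
    intro u'
    apply orth_of_min
    intro ε
    have h1 := hb (r + ε • u') s
    have h2 : R - embL p q (tensor (r + ε • u') s) = x - ε • embL p q (tensor u' s) := by
      rw [tensor_add_left, tensor_smul_left, map_add, _root_.map_smul, ← hT, hx]; module
    rwa [h2] at h1
  -- Pythagoras
  have hpyth : ‖R‖ ^ 2 = ‖x‖ ^ 2 + τ ^ 2 := by
    have hRxT : R = x + T := by rw [hx]; abel
    rw [hRxT, norm_add_sq_real, hxT, hTnorm]; ring
  -- Step C : σ₁ bound
  have hsig : ∀ (u : EuclideanSpace ℝ (Fin p)) (v : EuclideanSpace ℝ (Fin q)),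
      |⟪R, embL p q (tensor u v)⟫| ≤ τ * ‖embL p q (tensor u v)‖ := by
    intro u v
    set W := embL p q (tensor u v) with hW
    by_cases hW0 : W = 0
    · simp [hW0, mul_nonneg hτ0 (norm_nonneg W)]
    have hWn : ‖W‖ ≠ 0 := norm_ne_zero_iff.mpr hW0
    have hw2 : (0:ℝ) < ‖W‖ ^ 2 := by positivity
    set c := (⟪R, W⟫ : ℝ) with hc
    clear_value c
    have h1 := hb ((c / ‖W‖ ^ 2) • u) v
    have h2 : R - embL p q (tensor ((c / ‖W‖^2) • u) v) = R - (c / ‖W‖^2) • W := by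
      rw [tensor_smul_left, _root_.map_smul, ← hW]
    rw [h2] at h1
    have h3 : ‖x‖ ^ 2 ≤ ‖R - (c / ‖W‖^2) • W‖ ^ 2 := by
      nlinarith [norm_nonneg x, norm_nonneg (R - (c / ‖W‖^2) • W)]
    rw [norm_sub_sq_real, real_inner_smul_right, ← hc, norm_smul] at h3
    simp only [Real.norm_eq_abs, mul_pow, sq_abs] at h3
    have h4 : (c / ‖W‖^2) * c = c^2 / ‖W‖^2 := by ring
    have h5 : (c / ‖W‖^2)^2 * ‖W‖^2 = c^2 / ‖W‖^2 := by field_simp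
    rw [h4, h5] at h3
    have h6 : c^2 / ‖W‖^2 ≤ τ ^ 2 := by nlinarith
    have h7 : c^2 ≤ τ^2 * ‖W‖^2 := by
      rw [div_le_iff₀ hw2] at h6; linarith
    have h8 : c^2 ≤ (τ * ‖W‖)^2 := by rw [mul_pow]; exact h7
    have := Real.sqrt_le_sqrt h8
    rwa [Real.sqrt_sq_eq_abs, Real.sqrt_sq (by positivity)] at this
  -- Step D : key bound |⟪x, W⟫| ≤ τ‖W‖ for rank-one W
  have hkey : ∀ (u : EuclideanSpace ℝ (Fin p)) (v : EuclideanSpace ℝ (Fin q)),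
      |⟪x, embL p q (tensor u v)⟫| ≤ τ * ‖embL p q (tensor u v)‖ := by
    intro u v
    by_cases hr0 : r = 0
    · have ht0 : tensor r s = 0 := by
        funext i j; show r i * s j = 0; rw [hr0]; show (0:ℝ) * s j = 0; ring
      have hxR : x = R := by rw [hx, hT, ht0, map_zero, sub_zero]
      rw [hxR]; exact hsig u v
    by_cases hs0 : s = 0
    · have ht0 : tensor r s = 0 := by
        funext i j; show r i * s j = 0; rw [hs0]; show r i * (0:ℝ) = 0; ring
      have hxR : x = R := by rw [hx, hT, ht0, map_zero, sub_zero]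
      rw [hxR]; exact hsig u v
    have hrne : ‖r‖ ≠ 0 := norm_ne_zero_iff.mpr hr0
    have hsne : ‖s‖ ≠ 0 := norm_ne_zero_iff.mpr hs0
    have hrn : (0:ℝ) < ‖r‖ ^ 2 := by positivity
    have hsn : (0:ℝ) < ‖s‖ ^ 2 := by positivity
    obtain ⟨a, hadef⟩ : ∃ y : ℝ, y = ⟪u, r⟫ / ‖r‖^2 := ⟨_, rfl⟩
    obtain ⟨cc, hccdef⟩ : ∃ y : ℝ, y = ⟪v, s⟫ / ‖s‖^2 := ⟨_, rfl⟩
    obtain ⟨u', hu'def⟩ : ∃ y, y = u - a • r := ⟨_, rfl⟩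
    obtain ⟨v', hv'def⟩ : ∃ y, y = v - cc • s := ⟨_, rfl⟩
    have hu'r : ⟪u', r⟫ = 0 := by
      rw [hu'def, inner_sub_left, real_inner_smul_left, hadef, real_inner_self_eq_norm_sq]
      field_simp
      ring
    have hv's : ⟪v', s⟫ = 0 := by
      rw [hv'def, inner_sub_left, real_inner_smul_left, hccdef, real_inner_self_eq_norm_sq]
      field_simp
      ring
    have hdecomp : tensor u v
        = a • (cc • tensor r s) + a • tensor r v' + cc • tensor u' s + tensor u' v' := by
      have hu : u = a • r + u' := by rw [hu'def]; abel
      have hv : v = cc • s + v' := by rw [hv'def]; abel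
      conv_lhs => rw [hu, hv]
      rw [tensor_add_left, tensor_add_right, tensor_add_right, tensor_smul_left,
        tensor_smul_left, tensor_smul_right, tensor_smul_right]
      abel
    have hinner : ⟪x, embL p q (tensor u v)⟫ = ⟪x, embL p q (tensor u' v')⟫ := by
      rw [hdecomp]
      simp only [map_add, _root_.map_smul, inner_add_right, real_inner_smul_right]
      rw [← hT, hxT, hrv v', hus u']
      ring
    have hru' : ⟪r, u'⟫ = 0 := by rw [real_inner_comm]; exact hu'r
    have hTW' : ⟪T, embL p q (tensor u' v')⟫ = 0 := by
      rw [hT, inner_embL, frobInner_tensor, hru', zero_mul]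
    have hxW' : ⟪x, embL p q (tensor u' v')⟫ = ⟪R, embL p q (tensor u' v')⟫ := by
      rw [hx, inner_sub_left, hTW', sub_zero]
    have hnu' : ‖u'‖ ≤ ‖u‖ := by
      have hu : u = u' + a • r := by rw [hu'def]; abel
      have h1 : ‖u‖^2 = ‖u'‖^2 + 2 * (a * ⟪u', r⟫) + ‖a • r‖^2 := by
        rw [hu, norm_add_sq_real, real_inner_smul_right]
      rw [hu'r] at h1
      nlinarith [norm_nonneg u, norm_nonneg u', norm_nonneg (a • r)]
    have hnv' : ‖v'‖ ≤ ‖v‖ := by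
      have hv : v = v' + cc • s := by rw [hv'def]; abel
      have h1 : ‖v‖^2 = ‖v'‖^2 + 2 * (cc * ⟪v', s⟫) + ‖cc • s‖^2 := by
        rw [hv, norm_add_sq_real, real_inner_smul_right]
      rw [hv's] at h1
      nlinarith [norm_nonneg v, norm_nonneg v', norm_nonneg (cc • s)]
    have hnW' : ‖embL p q (tensor u' v')‖ ≤ ‖embL p q (tensor u v)‖ := by
      rw [norm_embL, norm_embL, norm_tensor, norm_tensor]
      exact mul_le_mul hnu' hnv' (norm_nonneg _) (norm_nonneg _)
    calc |⟪x, embL p q (tensor u v)⟫| = |⟪R, embL p q (tensor u' v')⟫| := by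
          rw [hinner, hxW']
      _ ≤ τ * ‖embL p q (tensor u' v')‖ := hsig u' v'
      _ ≤ τ * ‖embL p q (tensor u v)‖ := mul_le_mul_of_nonneg_left hnW' hτ0
  -- Step E : assemble
  set G := embL p q (Atil A B (tensor r s)) with hGdef
  clear_value G
  have hG : G = ∑ μ, embL p q (tensor (WithLp.toLp 2 ((A μ).mulVec r)) (WithLp.toLp 2 ((B μ).mulVec s))) := by
    rw [hGdef, Atil, map_sum]
    exact Finset.sum_congr rfl fun μ _ => by rw [mul_tensor]
  have hGμ : ∀ μ : Fin M, ‖embL p q (tensor (WithLp.toLp 2 ((A μ).mulVec r)) (WithLp.toLp 2 ((B μ).mulVec s)))‖ ≤ κ * τ := by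
    intro μ
    rw [norm_embL, ← mul_tensor, hτ]
    exact hκ μ _
  have hGnorm : ‖G‖ ≤ M * κ * τ := by
    rw [hG]
    calc ‖∑ μ, embL p q (tensor (WithLp.toLp 2 ((A μ).mulVec r)) (WithLp.toLp 2 ((B μ).mulVec s)))‖
        ≤ ∑ μ : Fin M, ‖embL p q (tensor (WithLp.toLp 2 ((A μ).mulVec r)) (WithLp.toLp 2 ((B μ).mulVec s)))‖ :=
          norm_sum_le _ _
      _ ≤ ∑ _μ : Fin M, κ * τ := Finset.sum_le_sum fun μ _ => hGμ μ
      _ = M * κ * τ := by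
          rw [Finset.sum_const, Finset.card_univ, Fintype.card_fin, nsmul_eq_mul]; ring
  have hxG : |⟪x, G⟫| ≤ M * κ * τ ^ 2 := by
    rw [hG, inner_sum]
    calc |∑ μ, ⟪x, embL p q (tensor (WithLp.toLp 2 ((A μ).mulVec r)) (WithLp.toLp 2 ((B μ).mulVec s)))⟫|
        ≤ ∑ μ, |⟪x, embL p q (tensor (WithLp.toLp 2 ((A μ).mulVec r)) (WithLp.toLp 2 ((B μ).mulVec s)))⟫| :=
          Finset.abs_sum_le_sum_abs _ _
      _ ≤ ∑ _μ : Fin M, τ * (κ * τ) := Finset.sum_le_sum fun μ _ =>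
          le_trans (hkey _ _) (mul_le_mul_of_nonneg_left (hGμ μ) hτ0)
      _ = M * κ * τ ^ 2 := by
          rw [Finset.sum_const, Finset.card_univ, Fintype.card_fin, nsmul_eq_mul]; ring
  have hfinal : frobNorm (R0 - tensor r s - Atil A B (tensor r s)) = ‖x - G‖ := by
    rw [← norm_embL, map_sub, map_sub, ← hR, ← hT, ← hGdef, ← hx]
  rw [hfinal, norm_sub_sq_real]
  have habs := abs_le.mp hxG
  have hGsq : ‖G‖ ^ 2 ≤ ((M:ℝ) * κ * τ) ^ 2 := by
    nlinarith [mul_self_le_mul_self (norm_nonneg G) hGnorm]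
  have hMκ0 : 0 ≤ (M:ℝ) * κ := mul_nonneg (Nat.cast_nonneg M) hκ0
  have hRn : ‖R‖ = frobNorm R0 := by rw [hR, norm_embL]
  rw [← hRn]
  nlinarith [sq_nonneg τ, mul_nonneg (mul_nonneg (sub_nonneg.mpr hMκ1) hMκ0) (sq_nonneg τ)]

end PGDAux

/-- Summability of the fixed-point PGD corrections: if `3Mκ < 1`, then
`Σ_n ‖r_{n+1}⊗s_{n+1}‖² ≤ ‖b − g₀ − Ã(g₀)‖² / (1 − 3Mκ)`; in particular
`‖r_n⊗s_n‖ → 0`. -/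
theorem stmt_12 {p q M : ℕ} (hp : 1 ≤ p) (hq : 1 ≤ q) (hM : 1 ≤ M)
    (A : Fin M → Matrix (Fin p) (Fin p) ℝ) (B : Fin M → Matrix (Fin q) (Fin q) ℝ)
    (κ : ℝ) (hκ0 : 0 ≤ κ)
    (hκ : ∀ (μ : Fin M) (g : Matrix (Fin p) (Fin q) ℝ),
      frobNorm (A μ * g * (B μ)ᵀ) ≤ κ * frobNorm g)
    (hcond : 3 * M * κ < 1)
    (b g₀ : Matrix (Fin p) (Fin q) ℝ)
    (f : ℕ → Matrix (Fin p) (Fin q) ℝ)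
    (r : ℕ → EuclideanSpace ℝ (Fin p)) (s : ℕ → EuclideanSpace ℝ (Fin q))
    (hf0 : f 0 = g₀)
    (hstep : ∀ n, f (n + 1) = f n + tensor (r n) (s n))
    (hbest : ∀ (n : ℕ) (u : EuclideanSpace ℝ (Fin p)) (v : EuclideanSpace ℝ (Fin q)),
      frobNorm ((b - f n - Atil A B (f n)) - tensor (r n) (s n))
        ≤ frobNorm ((b - f n - Atil A B (f n)) - tensor u v)) :
    Summable (fun n => frobNorm (tensor (r n) (s n)) ^ 2) ∧
    (∑' n, frobNorm (tensor (r n) (s n)) ^ 2)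
      ≤ frobNorm (b - g₀ - Atil A B g₀) ^ 2 / (1 - 3 * M * κ) ∧
    Tendsto (fun n => frobNorm (tensor (r n) (s n))) atTop (𝓝 0) := by
  have hMκ0 : 0 ≤ (M:ℝ) * κ := mul_nonneg (Nat.cast_nonneg M) hκ0
  have hpos : 0 < 1 - 3 * (M:ℝ) * κ := by linarith
  have hMκ1 : (M:ℝ) * κ ≤ 1 := by nlinarith
  set E : ℕ → Matrix (Fin p) (Fin q) ℝ := fun n => b - f n - Atil A B (f n) with hE
  have hAadd : ∀ x y : Matrix (Fin p) (Fin q) ℝ,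
      Atil A B (x + y) = Atil A B x + Atil A B y := by
    intro x y
    simp [Atil, Matrix.add_mul, Matrix.mul_add, Finset.sum_add_distrib]
  have hstepE : ∀ n, E (n+1) = E n - tensor (r n) (s n) - Atil A B (tensor (r n) (s n)) := by
    intro n
    simp only [hE]
    rw [hstep n, hAadd]
    abel
  have step : ∀ n, frobNorm (E (n+1)) ^ 2
      ≤ frobNorm (E n) ^ 2 - (1 - 3*M*κ) * frobNorm (tensor (r n) (s n)) ^ 2 := by
    intro n
    rw [hstepE n]
    exact PGDAux.key_step A B κ hκ0 hκ hMκ1 (E n) (r n) (s n) (fun u v => hbest n u v)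
  have tele : ∀ N, (1 - 3*(M:ℝ)*κ) * ∑ n ∈ Finset.range N, frobNorm (tensor (r n) (s n)) ^ 2
      ≤ frobNorm (E 0) ^ 2 - frobNorm (E N) ^ 2 := by
    intro N
    induction N with
    | zero => simp
    | succ N ih =>
      rw [Finset.sum_range_succ, mul_add]
      have := step N
      linarith
  have hE0 : E 0 = b - g₀ - Atil A B g₀ := by simp only [hE]; rw [hf0]
  have hbound : ∀ N, ∑ n ∈ Finset.range N, frobNorm (tensor (r n) (s n)) ^ 2
      ≤ frobNorm (b - g₀ - Atil A B g₀) ^ 2 / (1 - 3*(M:ℝ)*κ) := by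
    intro N
    rw [le_div_iff₀ hpos]
    have h1 := tele N
    have h2 : (0:ℝ) ≤ frobNorm (E N) ^ 2 := sq_nonneg _
    rw [hE0] at h1
    nlinarith
  have hsummable : Summable (fun n => frobNorm (tensor (r n) (s n)) ^ 2) :=
    summable_of_sum_range_le (fun n => sq_nonneg _) hbound
  refine ⟨hsummable, Real.tsum_le_of_sum_range_le (fun n => sq_nonneg _) hbound, ?_⟩
  have h0 := hsummable.tendsto_atTop_zero
  have h1 : Tendsto (fun n => Real.sqrt (frobNorm (tensor (r n) (s n)) ^ 2)) atTop
      (𝓝 (Real.sqrt 0)) :=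
    (Real.continuous_sqrt.continuousAt).tendsto.comp h0
  rw [Real.sqrt_zero] at h1
  exact h1.congr fun n => Real.sqrt_sq (Real.sqrt_nonneg _)


end
end

section
/- Convergence of the fixed-point PGD algorithm (Proposition 2, case (A1), discretized setting): assume 3Mκ < 1. Then there is a unique f ∈ H with f + Ã(f) = b, and every fixed-point PGD sequence (f_n) with f₀ = g₀ converges to f in the Frobenius norm. -/
open Matrix Filter Topology

noncomputable section

namespace PGD

variable {p q : ℕ}

def tensorF {p q : ℕ} (a : Fin p → ℝ) (b : Fin q → ℝ) : Matrix (Fin p) (Fin q) ℝ :=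
  tensor (WithLp.toLp 2 a) (WithLp.toLp 2 b)

/-! ### Frobenius inner product basics -/

lemma frobInner_def (A B : Matrix (Fin p) (Fin q) ℝ) :
    frobInner A B = ∑ i, ∑ j, A i j * B i j := by
  simp only [frobInner, Matrix.trace, Matrix.diag, Matrix.mul_apply, Matrix.transpose_apply]
  rw [Finset.sum_comm]

lemma frobInner_comm (A B : Matrix (Fin p) (Fin q) ℝ) : frobInner A B = frobInner B A := by
  simp only [frobInner_def]; congr 1; ext i; congr 1; ext j; ring

lemma frobInner_self_nonneg (A : Matrix (Fin p) (Fin q) ℝ) : 0 ≤ frobInner A A := by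
  rw [frobInner_def]
  exact Finset.sum_nonneg fun i _ => Finset.sum_nonneg fun j _ => mul_self_nonneg _

lemma frobInner_add_left (A B C : Matrix (Fin p) (Fin q) ℝ) :
    frobInner (A + B) C = frobInner A C + frobInner B C := by
  simp only [frobInner_def, Matrix.add_apply, ← Finset.sum_add_distrib]
  congr 1; ext i; congr 1; ext j; ring

lemma frobInner_sub_left (A B C : Matrix (Fin p) (Fin q) ℝ) :
    frobInner (A - B) C = frobInner A C - frobInner B C := by
  simp only [frobInner_def, Matrix.sub_apply, ← Finset.sum_sub_distrib]
  congr 1; ext i; congr 1; ext j; ring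

lemma frobInner_add_right (A B C : Matrix (Fin p) (Fin q) ℝ) :
    frobInner A (B + C) = frobInner A B + frobInner A C := by
  rw [frobInner_comm, frobInner_add_left, frobInner_comm B, frobInner_comm C]

lemma frobInner_sub_right (A B C : Matrix (Fin p) (Fin q) ℝ) :
    frobInner A (B - C) = frobInner A B - frobInner A C := by
  rw [frobInner_comm, frobInner_sub_left, frobInner_comm B, frobInner_comm C]

lemma frobInner_smul_right (c : ℝ) (A B : Matrix (Fin p) (Fin q) ℝ) :
    frobInner A (c • B) = c * frobInner A B := by
  simp only [frobInner_def, Matrix.smul_apply, Finset.mul_sum, smul_eq_mul]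
  congr 1; ext i; congr 1; ext j; ring

lemma frobInner_smul_left (c : ℝ) (A B : Matrix (Fin p) (Fin q) ℝ) :
    frobInner (c • A) B = c * frobInner A B := by
  rw [frobInner_comm, frobInner_smul_right, frobInner_comm]

lemma frobInner_zero_left (B : Matrix (Fin p) (Fin q) ℝ) : frobInner 0 B = 0 := by
  simp [frobInner_def]

lemma frobInner_zero_right (A : Matrix (Fin p) (Fin q) ℝ) : frobInner A 0 = 0 := by
  simp [frobInner_def]

lemma frobInner_neg_right (A B : Matrix (Fin p) (Fin q) ℝ) :
    frobInner A (-B) = -frobInner A B := by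
  have : (-B) = (-1 : ℝ) • B := by ext i j; simp
  rw [this, frobInner_smul_right]; ring

lemma frobInner_neg_left (A B : Matrix (Fin p) (Fin q) ℝ) :
    frobInner (-A) B = -frobInner A B := by
  rw [frobInner_comm, frobInner_neg_right, frobInner_comm]

lemma frobNorm_nonneg (A : Matrix (Fin p) (Fin q) ℝ) : 0 ≤ frobNorm A := Real.sqrt_nonneg _

lemma frobNorm_sq (A : Matrix (Fin p) (Fin q) ℝ) : frobNorm A ^ 2 = frobInner A A := by
  rw [frobNorm, Real.sq_sqrt (frobInner_self_nonneg A)]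

lemma frobNorm_eq_zero {A : Matrix (Fin p) (Fin q) ℝ} (h : frobNorm A = 0) : A = 0 := by
  have h2 : frobInner A A = 0 := by
    have h3 := frobNorm_sq A; rw [h] at h3; simpa using h3.symm
  rw [frobInner_def] at h2
  ext i j
  have hi := (Finset.sum_eq_zero_iff_of_nonneg (fun i _ => Finset.sum_nonneg
    fun j _ => mul_self_nonneg (A i j))).1 h2 i (Finset.mem_univ i)
  have hj := (Finset.sum_eq_zero_iff_of_nonneg (fun j _ => mul_self_nonneg (A i j))).1 hi j
    (Finset.mem_univ j)
  simpa [mul_self_eq_zero] using hj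

lemma frobNorm_zero : frobNorm (0 : Matrix (Fin p) (Fin q) ℝ) = 0 := by
  simp [frobNorm, frobInner_zero_left]

lemma frobInner_single_sum (A B : Matrix (Fin p) (Fin q) ℝ) :
    frobInner A B = ∑ x : Fin p × Fin q, A x.1 x.2 * B x.1 x.2 := by
  rw [frobInner_def, Fintype.sum_prod_type]

lemma frobInner_le_norm (A B : Matrix (Fin p) (Fin q) ℝ) :
    frobInner A B ≤ frobNorm A * frobNorm B := by
  have h := Finset.sum_mul_sq_le_sq_mul_sq Finset.univ
    (fun x : Fin p × Fin q => A x.1 x.2) (fun x => B x.1 x.2)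
  have h1 : frobInner A B ^ 2 ≤ frobInner A A * frobInner B B := by
    simpa only [← frobInner_single_sum, ← mul_pow, pow_two, ← mul_assoc] using h
  calc frobInner A B ≤ |frobInner A B| := le_abs_self _
    _ = Real.sqrt (frobInner A B ^ 2) := (Real.sqrt_sq_eq_abs _).symm
    _ ≤ Real.sqrt (frobInner A A * frobInner B B) := Real.sqrt_le_sqrt h1
    _ = frobNorm A * frobNorm B := by
        rw [frobNorm, frobNorm, ← Real.sqrt_mul (frobInner_self_nonneg A)]

lemma le_of_sq_le_sq {a b : ℝ} (ha : 0 ≤ a) (hb : 0 ≤ b) (h : a ^ 2 ≤ b ^ 2) : a ≤ b := by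
  nlinarith

lemma frobNorm_add_le (A B : Matrix (Fin p) (Fin q) ℝ) :
    frobNorm (A + B) ≤ frobNorm A + frobNorm B := by
  apply le_of_sq_le_sq (frobNorm_nonneg _) (add_nonneg (frobNorm_nonneg _) (frobNorm_nonneg _))
  have hexp : frobInner (A + B) (A + B)
      = frobInner A A + 2 * frobInner A B + frobInner B B := by
    rw [frobInner_add_left, frobInner_add_right, frobInner_add_right, frobInner_comm B A]; ring
  rw [frobNorm_sq, hexp]
  have hcs := frobInner_le_norm A B
  have hA := frobNorm_sq A
  have hB := frobNorm_sq B
  nlinarith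

lemma frobNorm_neg (A : Matrix (Fin p) (Fin q) ℝ) : frobNorm (-A) = frobNorm A := by
  unfold frobNorm
  rw [frobInner_neg_left, frobInner_neg_right, neg_neg]

lemma frobNorm_finset_sum_le {ι : Type*} (t : Finset ι) (F : ι → Matrix (Fin p) (Fin q) ℝ) :
    frobNorm (∑ i ∈ t, F i) ≤ ∑ i ∈ t, frobNorm (F i) := by
  classical
  induction t using Finset.induction with
  | empty => simp [frobNorm_zero]
  | @insert a t ha ih =>
      rw [Finset.sum_insert ha, Finset.sum_insert ha]
      exact le_trans (frobNorm_add_le _ _) (by linarith)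

/-! ### tensorF basics -/

lemma tensor_apply (a : Fin p → ℝ) (b : Fin q → ℝ) (i : Fin p) (j : Fin q) :
    tensorF a b i j = a i * b j := rfl

lemma frobInner_tensor_tensor (a u : Fin p → ℝ) (b v : Fin q → ℝ) :
    frobInner (tensorF a b) (tensorF u v) = (∑ i, a i * u i) * (∑ j, b j * v j) := by
  rw [frobInner_def, Finset.sum_mul_sum]
  congr 1; ext i; congr 1; ext j
  simp [tensor_apply]; ring

lemma frobNorm_tensor (a : Fin p → ℝ) (b : Fin q → ℝ) :
    frobNorm (tensorF a b) = Real.sqrt (∑ i, (a i)^2) * Real.sqrt (∑ j, (b j)^2) := by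
  rw [frobNorm, ← Real.sqrt_mul (by positivity)]
  congr 1
  rw [frobInner_tensor_tensor]
  congr 1 <;> { congr 1; ext i; ring }

lemma frobInner_tensor_right (X : Matrix (Fin p) (Fin q) ℝ) (u : Fin p → ℝ) (v : Fin q → ℝ) :
    frobInner X (tensorF u v) = ∑ i, u i * (X.mulVec v i) := by
  rw [frobInner_def]
  congr 1; ext i
  simp only [Matrix.mulVec, dotProduct, tensor_apply, Finset.mul_sum]
  congr 1; ext j; ring

lemma tensor_mulVec (a : Fin p → ℝ) (b : Fin q → ℝ) (x : Fin q → ℝ) :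
    (tensorF a b).mulVec x = (∑ j, b j * x j) • a := by
  funext i
  simp only [Matrix.mulVec, dotProduct, tensor_apply, Pi.smul_apply, smul_eq_mul,
    Finset.sum_mul]
  congr 1; ext j; ring

lemma tensor_smul_left (c : ℝ) (a : Fin p → ℝ) (b : Fin q → ℝ) :
    tensorF (c • a) b = c • tensorF a b := by
  ext i j
  simp [tensor_apply, Matrix.smul_apply]
  ring

lemma tensor_smul_right (c : ℝ) (a : Fin p → ℝ) (b : Fin q → ℝ) :
    tensorF a (c • b) = c • tensorF a b := by
  ext i j
  simp [tensor_apply, Matrix.smul_apply]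
  ring

lemma tensor_transpose (a : Fin p → ℝ) (b : Fin q → ℝ) :
    (tensorF a b)ᵀ = tensorF b a := by
  ext i j; simp [tensor_apply, Matrix.transpose_apply]; ring

lemma frobNorm_transpose (X : Matrix (Fin p) (Fin q) ℝ) : frobNorm Xᵀ = frobNorm X := by
  unfold frobNorm
  congr 1
  rw [frobInner_def, frobInner_def, Finset.sum_comm]
  simp [Matrix.transpose_apply]

lemma tensor_zero_left (b : Fin q → ℝ) : tensorF (0 : Fin p → ℝ) b = 0 := by
  ext i j; simp [tensor_apply]

lemma vec_eq_zero_of_sum_sq {n : ℕ} {x : Fin n → ℝ} (h : ∑ i, (x i)^2 ≤ 0) : x = 0 := by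
  have h0 : ∑ i, (x i)^2 = 0 :=
    le_antisymm h (Finset.sum_nonneg fun i _ => sq_nonneg _)
  funext i
  have := (Finset.sum_eq_zero_iff_of_nonneg (fun i _ => sq_nonneg (x i))).1 h0 i
    (Finset.mem_univ i)
  exact pow_eq_zero_iff (by norm_num) |>.1 this

lemma sum_sq_sub {n : ℕ} (y u : Fin n → ℝ) (c : ℝ) :
    ∑ i, (y i - c * u i)^2
      = (∑ i, (y i)^2) - 2*c*(∑ i, u i * y i) + c^2 * (∑ i, (u i)^2) := by
  have h : ∀ i : Fin n, (y i - c*u i)^2 = (y i)^2 - 2*c*(u i * y i) + c^2 * (u i)^2 :=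
    fun i => by ring
  simp only [h, Finset.sum_add_distrib, Finset.sum_sub_distrib, ← Finset.mul_sum]

lemma sum_sq_add {n : ℕ} (y u : Fin n → ℝ) (c : ℝ) :
    ∑ i, (y i + c * u i)^2
      = (∑ i, (y i)^2) + 2*c*(∑ i, u i * y i) + c^2 * (∑ i, (u i)^2) := by
  have h := sum_sq_sub y u (-c)
  have h2 : ∀ i : Fin n, (y i + c * u i)^2 = (y i - (-c) * u i)^2 := fun i => by ring
  simp only [h2, h]; ring


/-! ### The dual (nuclear-norm) potential -/

/-- `W` is an operator-norm contraction. -/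
def Adm (W : Matrix (Fin p) (Fin q) ℝ) : Prop :=
  ∀ x : Fin q → ℝ, ∑ i, (W.mulVec x i)^2 ≤ ∑ j, (x j)^2

/-- Dual characterization of the nuclear norm. -/
def Dfun (X : Matrix (Fin p) (Fin q) ℝ) : ℝ :=
  sSup {y | ∃ W, Adm W ∧ y = frobInner X W}

lemma adm_zero : Adm (0 : Matrix (Fin p) (Fin q) ℝ) := by
  intro x
  have h0 : ∑ i, ((0 : Matrix (Fin p) (Fin q) ℝ).mulVec x i)^2 = 0 := by
    simp [Matrix.zero_mulVec]
  rw [h0]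
  positivity

lemma adm_fi_self_le {W : Matrix (Fin p) (Fin q) ℝ} (hW : Adm W) :
    frobInner W W ≤ (q : ℝ) := by
  rw [frobInner_def, Finset.sum_comm]
  have hcol : ∀ j : Fin q, ∑ i, W i j * W i j ≤ 1 := by
    intro j
    set e : Fin q → ℝ := fun k => if k = j then 1 else 0 with he
    have h := hW e
    have hmv : ∀ i, W.mulVec e i = W i j := by
      intro i
      simp [Matrix.mulVec, dotProduct, he, mul_ite]
    have hx : ∑ k : Fin q, (e k)^2 = 1 := by
      simp [he, sq, ite_pow]
    rw [hx] at h
    calc ∑ i, W i j * W i j = ∑ i, (W.mulVec e i)^2 := by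
          congr 1; ext i; rw [hmv]; ring
      _ ≤ 1 := h
  calc ∑ j, ∑ i, W i j * W i j ≤ ∑ _j : Fin q, (1:ℝ) := Finset.sum_le_sum fun j _ => hcol j
    _ = q := by simp

lemma adm_norm_le {W : Matrix (Fin p) (Fin q) ℝ} (hW : Adm W) :
    frobNorm W ≤ Real.sqrt q := by
  rw [frobNorm]
  exact Real.sqrt_le_sqrt (adm_fi_self_le hW)

lemma Dset_zero_mem (X : Matrix (Fin p) (Fin q) ℝ) :
    (0:ℝ) ∈ {y | ∃ W, Adm W ∧ y = frobInner X W} :=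
  ⟨0, adm_zero, (frobInner_zero_right X).symm⟩

lemma Dset_bddAbove (X : Matrix (Fin p) (Fin q) ℝ) :
    BddAbove {y | ∃ W, Adm W ∧ y = frobInner X W} := by
  refine ⟨frobNorm X * Real.sqrt q, ?_⟩
  rintro y ⟨W, hW, rfl⟩
  calc frobInner X W ≤ frobNorm X * frobNorm W := frobInner_le_norm X W
    _ ≤ frobNorm X * Real.sqrt q :=
        mul_le_mul_of_nonneg_left (adm_norm_le hW) (frobNorm_nonneg X)

lemma le_Dfun {X W : Matrix (Fin p) (Fin q) ℝ} (hW : Adm W) :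
    frobInner X W ≤ Dfun X :=
  le_csSup (Dset_bddAbove X) ⟨W, hW, rfl⟩

lemma Dfun_nonneg (X : Matrix (Fin p) (Fin q) ℝ) : 0 ≤ Dfun X := by
  have := le_csSup (Dset_bddAbove X) (Dset_zero_mem X)
  exact this

lemma Dfun_le {X : Matrix (Fin p) (Fin q) ℝ} {c : ℝ}
    (h : ∀ W, Adm W → frobInner X W ≤ c) : Dfun X ≤ c :=
  csSup_le ⟨0, Dset_zero_mem X⟩ (by rintro y ⟨W, hW, rfl⟩; exact h W hW)

lemma Dfun_zero : Dfun (0 : Matrix (Fin p) (Fin q) ℝ) = 0 :=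
  le_antisymm (Dfun_le fun W _ => le_of_eq (frobInner_zero_left W)) (Dfun_nonneg 0)

lemma Dfun_add_le (X Y : Matrix (Fin p) (Fin q) ℝ) :
    Dfun (X + Y) ≤ Dfun X + Dfun Y :=
  Dfun_le fun W hW => by
    rw [frobInner_add_left]
    exact add_le_add (le_Dfun hW) (le_Dfun hW)

lemma adm_neg {W : Matrix (Fin p) (Fin q) ℝ} (hW : Adm W) : Adm (-W) := by
  intro x
  have h := hW x
  have : ∀ i, ((-W).mulVec x i)^2 = (W.mulVec x i)^2 := by
    intro i
    rw [Matrix.neg_mulVec]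
    simp [sq]
  calc ∑ i, ((-W).mulVec x i)^2 = ∑ i, (W.mulVec x i)^2 := by
        congr 1; ext i; exact this i
    _ ≤ _ := h

lemma Dfun_neg_le (X : Matrix (Fin p) (Fin q) ℝ) : Dfun (-X) ≤ Dfun X :=
  Dfun_le fun W hW => by
    have : frobInner (-X) W = frobInner X (-W) := by
      rw [frobInner_neg_left, frobInner_neg_right]
    rw [this]
    exact le_Dfun (adm_neg hW)

lemma Dfun_finset_sum_le {ι : Type*} (t : Finset ι) (F : ι → Matrix (Fin p) (Fin q) ℝ) :
    Dfun (∑ i ∈ t, F i) ≤ ∑ i ∈ t, Dfun (F i) := by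
  classical
  induction t using Finset.induction with
  | empty => simp [Dfun_zero]
  | @insert a t ha ih =>
      rw [Finset.sum_insert ha, Finset.sum_insert ha]
      exact le_trans (Dfun_add_le _ _) (by linarith)

lemma Dfun_tensor_le (a : Fin p → ℝ) (b : Fin q → ℝ) :
    Dfun (tensorF a b) ≤ frobNorm (tensorF a b) := by
  apply Dfun_le
  intro W hW
  rw [frobInner_def]
  have h1 : ∑ i, ∑ j, tensorF a b i j * W i j = ∑ i, a i * (W.mulVec b i) := by
    congr 1; ext i
    simp only [Matrix.mulVec, dotProduct, tensor_apply, Finset.mul_sum]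
    congr 1; ext j; ring
  rw [h1]
  have hcs := Finset.sum_mul_sq_le_sq_mul_sq Finset.univ a (fun i => W.mulVec b i)
  have hWb := hW b
  have h2 : (∑ i, a i * (W.mulVec b i))^2 ≤ (∑ i, (a i)^2) * (∑ j, (b j)^2) := by
    calc (∑ i, a i * (W.mulVec b i))^2 ≤ (∑ i, (a i)^2) * (∑ i, (W.mulVec b i)^2) := hcs
      _ ≤ (∑ i, (a i)^2) * (∑ j, (b j)^2) :=
          mul_le_mul_of_nonneg_left hWb (Finset.sum_nonneg fun i _ => sq_nonneg _)
  rw [frobNorm_tensor]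
  calc ∑ i, a i * (W.mulVec b i) ≤ |∑ i, a i * (W.mulVec b i)| := le_abs_self _
    _ = Real.sqrt ((∑ i, a i * (W.mulVec b i))^2) := (Real.sqrt_sq_eq_abs _).symm
    _ ≤ Real.sqrt ((∑ i, (a i)^2) * (∑ j, (b j)^2)) := Real.sqrt_le_sqrt h2
    _ = Real.sqrt (∑ i, (a i)^2) * Real.sqrt (∑ j, (b j)^2) :=
        Real.sqrt_mul (Finset.sum_nonneg fun i _ => sq_nonneg _) _

lemma Dfun_le_sqrtq (X : Matrix (Fin p) (Fin q) ℝ) :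
    Dfun X ≤ Real.sqrt q * frobNorm X :=
  Dfun_le fun W hW => by
    calc frobInner X W ≤ frobNorm X * frobNorm W := frobInner_le_norm X W
      _ ≤ frobNorm X * Real.sqrt q :=
          mul_le_mul_of_nonneg_left (adm_norm_le hW) (frobNorm_nonneg X)
      _ = Real.sqrt q * frobNorm X := mul_comm _ _


/-! ### Consequences of best rank-one approximation -/

section Best

variable {R : Matrix (Fin p) (Fin q) ℝ} {r : Fin p → ℝ} {s : Fin q → ℝ}

lemma best_quad
    (hb : ∀ (u : Fin p → ℝ) (v : Fin q → ℝ),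
      frobNorm (R - tensorF r s) ≤ frobNorm (R - tensorF u v))
    (u : Fin p → ℝ) (v : Fin q → ℝ) :
    2 * frobInner R (tensorF u v) - frobInner (tensorF u v) (tensorF u v)
      ≤ 2 * frobInner R (tensorF r s) - frobInner (tensorF r s) (tensorF r s) := by
  have h := hb u v
  have h2 : frobInner (R - tensorF r s) (R - tensorF r s)
      ≤ frobInner (R - tensorF u v) (R - tensorF u v) := by
    rw [← frobNorm_sq, ← frobNorm_sq]
    exact pow_le_pow_left₀ (frobNorm_nonneg _) h 2
  have e1 : frobInner (R - tensorF r s) (R - tensorF r s)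
      = frobInner R R - 2*frobInner R (tensorF r s)
        + frobInner (tensorF r s) (tensorF r s) := by
    rw [frobInner_sub_left, frobInner_sub_right, frobInner_sub_right,
      frobInner_comm (tensorF r s) R]
    ring
  have e2 : frobInner (R - tensorF u v) (R - tensorF u v)
      = frobInner R R - 2*frobInner R (tensorF u v)
        + frobInner (tensorF u v) (tensorF u v) := by
    rw [frobInner_sub_left, frobInner_sub_right, frobInner_sub_right,
      frobInner_comm (tensorF u v) R]
    ring
  rw [e1, e2] at h2
  linarith

lemma best_ident
    (hb : ∀ (u : Fin p → ℝ) (v : Fin q → ℝ),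
      frobNorm (R - tensorF r s) ≤ frobNorm (R - tensorF u v)) :
    frobInner R (tensorF r s) = frobInner (tensorF r s) (tensorF r s) := by
  set a := frobInner R (tensorF r s) with ha
  set bb := frobInner (tensorF r s) (tensorF r s) with hbb
  have hbnn : 0 ≤ bb := frobInner_self_nonneg _
  have hq : ∀ c : ℝ, 2*c*a - c^2*bb ≤ 2*a - bb := by
    intro c
    have h := best_quad hb (c • r) s
    rw [tensor_smul_left, frobInner_smul_right, frobInner_smul_left,
      frobInner_smul_right] at h
    calc 2*c*a - c^2*bb = 2*(c*a) - c*(c*bb) := by ring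
      _ ≤ 2*a - bb := h
  by_cases h0 : bb = 0
  · have ha0 := hq 0
    have ha2 := hq 2
    rw [h0] at ha0 ha2 ⊢
    linarith
  · have hpos : 0 < bb := lt_of_le_of_ne hbnn (Ne.symm h0)
    have h := hq (a/bb)
    have e1 : 2*(a/bb)*a - (a/bb)^2*bb = a^2/bb := by
      field_simp
      ring
    rw [e1] at h
    have h2 : a^2 ≤ (2*a - bb)*bb := (div_le_iff₀ hpos).1 h
    have h3 : (a - bb)^2 ≤ 0 := by nlinarith
    have h4 : a - bb = 0 := by nlinarith [sq_nonneg (a - bb)]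
    linarith

lemma best_sq_bound
    (hb : ∀ (u : Fin p → ℝ) (v : Fin q → ℝ),
      frobNorm (R - tensorF r s) ≤ frobNorm (R - tensorF u v))
    (u : Fin p → ℝ) (v : Fin q → ℝ) :
    (frobInner R (tensorF u v))^2
      ≤ frobInner (tensorF r s) (tensorF r s) * ((∑ i, (u i)^2) * (∑ j, (v j)^2)) := by
  set a := frobInner R (tensorF u v) with ha
  set bb := frobInner (tensorF r s) (tensorF r s) with hbb
  set P := (∑ i, (u i)^2) * (∑ j, (v j)^2) with hP
  have hPnn : 0 ≤ P := by positivity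
  have hbnn : 0 ≤ bb := frobInner_self_nonneg _
  have hfiP : frobInner (tensorF u v) (tensorF u v) = P := by
    rw [frobInner_tensor_tensor, hP]
    congr 1 <;> { congr 1; ext i; ring }
  have hq : ∀ c : ℝ, 2*c*a - c^2*P ≤ bb := by
    intro c
    have h := best_quad hb (c • u) v
    rw [tensor_smul_left, frobInner_smul_right, frobInner_smul_left,
      frobInner_smul_right, hfiP, ← ha, ← hbb, best_ident hb, ← hbb] at h
    calc 2*c*a - c^2*P = 2*(c*a) - c*(c*P) := by ring
      _ ≤ 2*bb - bb := h
      _ = bb := by ring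
  by_cases hP0 : P = 0
  · have ha0 : a = 0 := by
      by_contra hane
      have h := hq ((bb+1)/(2*a))
      rw [hP0] at h
      have e1 : 2*((bb+1)/(2*a))*a - ((bb+1)/(2*a))^2*0 = bb + 1 := by
        field_simp
        ring
      rw [e1] at h
      linarith
    rw [ha0, hP0]
    simp
  · have hPpos : 0 < P := lt_of_le_of_ne hPnn (Ne.symm hP0)
    have h := hq (a/P)
    have e1 : 2*(a/P)*a - (a/P)^2*P = a^2/P := by
      field_simp
      ring
    rw [e1] at h
    exact (div_le_iff₀ hPpos).1 h

lemma best_R_eq_zero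
    (hb : ∀ (u : Fin p → ℝ) (v : Fin q → ℝ),
      frobNorm (R - tensorF r s) ≤ frobNorm (R - tensorF u v))
    (ht : frobNorm (tensorF r s) = 0) : R = 0 := by
  have hzz : frobInner (tensorF r s) (tensorF r s) = 0 := by
    have := frobNorm_sq (tensorF r s)
    rw [ht] at this
    simpa using this.symm
  ext i j
  set eu : Fin p → ℝ := fun k => if k = i then 1 else 0 with heu
  set ev : Fin q → ℝ := fun k => if k = j then 1 else 0 with hev
  have hfi : frobInner R (tensorF eu ev) = R i j := by
    rw [frobInner_tensor_right]
    have hmv : ∀ k, R.mulVec ev k = R k j := by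
      intro k
      simp [Matrix.mulVec, dotProduct, hev, mul_ite]
    calc ∑ k, eu k * R.mulVec ev k = ∑ k, (if k = i then R k j else 0) := by
          congr 1; ext k; rw [hmv, heu]; by_cases h : k = i <;> simp [h]
      _ = R i j := by simp
  have hb2 := best_sq_bound hb eu ev
  rw [hfi, hzz] at hb2
  have : (R i j)^2 ≤ 0 := by
    calc (R i j)^2 ≤ 0 * _ := hb2
      _ = 0 := by ring
  have h4 : R i j = 0 := by nlinarith [sq_nonneg (R i j)]
  simpa using h4

lemma best_mulVec
    (hb : ∀ (u : Fin p → ℝ) (v : Fin q → ℝ),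
      frobNorm (R - tensorF r s) ≤ frobNorm (R - tensorF u v))
    (hs : 0 < ∑ j, (s j)^2) :
    R.mulVec s = (∑ j, (s j)^2) • r := by
  set σ := ∑ j, (s j)^2 with hσ
  set ρ := ∑ i, (r i)^2 with hρ
  set y := R.mulVec s with hy
  have hzz : frobInner (tensorF r s) (tensorF r s) = ρ * σ := by
    rw [frobInner_tensor_tensor]
    congr 1 <;> { congr 1; ext i; ring }
  have e1 : frobInner R (tensorF r s) = ∑ i, r i * y i := frobInner_tensor_right R r s
  have e2 : ∑ i, r i * y i = ρ * σ := by
    rw [← e1, best_ident hb, hzz]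
  have e3 : (∑ i, (y i)^2)^2 ≤ (ρ*σ) * ((∑ i, (y i)^2) * σ) := by
    have h := best_sq_bound hb y s
    rw [frobInner_tensor_right, ← hy] at h
    have hyy : ∑ i, y i * y i = ∑ i, (y i)^2 := by congr 1; ext i; ring
    rw [hyy, hzz] at h
    exact h
  have hynn : 0 ≤ ∑ i, (y i)^2 := Finset.sum_nonneg fun i _ => sq_nonneg _
  have e4 : ∑ i, (y i)^2 ≤ ρ * σ^2 := by
    by_cases hy0 : ∑ i, (y i)^2 = 0
    · rw [hy0]
      positivity
    · have hypos : 0 < ∑ i, (y i)^2 := lt_of_le_of_ne hynn (Ne.symm hy0)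
      nlinarith
  have e5 : ∑ i, (y i - σ * r i)^2 ≤ 0 := by
    rw [sum_sq_sub]
    calc (∑ i, (y i)^2) - 2*σ*(∑ i, r i * y i) + σ^2 * (∑ i, (r i)^2)
        = (∑ i, (y i)^2) - 2*σ*(ρ*σ) + σ^2*ρ := by rw [e2, ← hρ]
      _ = (∑ i, (y i)^2) - ρ*σ^2 := by ring
      _ ≤ 0 := by linarith
  have e6 : (fun i => y i - σ * r i) = 0 := vec_eq_zero_of_sum_sq e5
  funext i
  have := congrFun e6 i
  simp only [Pi.zero_apply] at this
  have : y i = σ * r i := by linarith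
  simpa [Pi.smul_apply, smul_eq_mul] using this

end Best

/-! ### Norm comparisons for the residual -/

section Best2

variable {R : Matrix (Fin p) (Fin q) ℝ} {r : Fin p → ℝ} {s : Fin q → ℝ}

lemma best_normsq_le
    (hb : ∀ (u : Fin p → ℝ) (v : Fin q → ℝ),
      frobNorm (R - tensorF r s) ≤ frobNorm (R - tensorF u v)) :
    frobInner R R ≤ frobNorm (tensorF r s) * Dfun R := by
  set t := frobNorm (tensorF r s) with hts
  by_cases ht : t = 0
  · have hR0 : R = 0 := best_R_eq_zero hb ht
    rw [hR0, ht, frobInner_zero_left]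
    simp
  · have htpos : 0 < t := lt_of_le_of_ne (frobNorm_nonneg _) (Ne.symm ht)
    have hzz : frobInner (tensorF r s) (tensorF r s) = t^2 := (frobNorm_sq _).symm
    -- the rescaled R is admissible
    have hadm : Adm (t⁻¹ • R) := by
      intro x
      set y := R.mulVec x with hy
      have hyx : ∑ i, (y i)^2 ≤ t^2 * ∑ j, (x j)^2 := by
        have h := best_sq_bound hb y x
        rw [frobInner_tensor_right, ← hy, hzz] at h
        have hyy : ∑ i, y i * y i = ∑ i, (y i)^2 := by congr 1; ext i; ring
        rw [hyy] at h
        by_cases hy0 : ∑ i, (y i)^2 = 0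
        · rw [hy0]
          positivity
        · have hypos : 0 < ∑ i, (y i)^2 :=
            lt_of_le_of_ne (Finset.sum_nonneg fun i _ => sq_nonneg _) (Ne.symm hy0)
          nlinarith
      have hsm : (t⁻¹ • R).mulVec x = t⁻¹ • y := by
        rw [hy]
        exact Matrix.smul_mulVec t⁻¹ R x
      rw [hsm]
      have : ∑ i, ((t⁻¹ • y) i)^2 = t⁻¹^2 * ∑ i, (y i)^2 := by
        rw [Finset.mul_sum]
        congr 1; ext i
        simp [Pi.smul_apply, smul_eq_mul]
        ring
      rw [this]
      calc t⁻¹^2 * ∑ i, (y i)^2 ≤ t⁻¹^2 * (t^2 * ∑ j, (x j)^2) := by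
            apply mul_le_mul_of_nonneg_left hyx (by positivity)
        _ = ∑ j, (x j)^2 := by
            field_simp
    have hD := le_Dfun (X := R) hadm
    have hsc : frobInner R (t⁻¹ • R) = t⁻¹ * frobInner R R := frobInner_smul_right _ _ _
    rw [hsc] at hD
    calc frobInner R R = t * (t⁻¹ * frobInner R R) := by field_simp
      _ ≤ t * Dfun R := mul_le_mul_of_nonneg_left hD (le_of_lt htpos)

lemma best_t_le_norm
    (hb : ∀ (u : Fin p → ℝ) (v : Fin q → ℝ),
      frobNorm (R - tensorF r s) ≤ frobNorm (R - tensorF u v)) :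
    frobNorm (tensorF r s) ≤ frobNorm R := by
  set t := frobNorm (tensorF r s) with hts
  by_cases ht : t = 0
  · rw [ht]; exact frobNorm_nonneg R
  · have htpos : 0 < t := lt_of_le_of_ne (frobNorm_nonneg _) (Ne.symm ht)
    have h1 : t^2 = frobInner R (tensorF r s) := by
      rw [best_ident hb, ← frobNorm_sq]
    have h2 : frobInner R (tensorF r s) ≤ frobNorm R * t := frobInner_le_norm _ _
    nlinarith

lemma best_norm_le_Dfun
    (hb : ∀ (u : Fin p → ℝ) (v : Fin q → ℝ),
      frobNorm (R - tensorF r s) ≤ frobNorm (R - tensorF u v)) :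
    frobNorm R ≤ Dfun R := by
  have h1 := best_normsq_le hb
  have h2 := best_t_le_norm hb
  have h3 : frobNorm R ^2 = frobInner R R := frobNorm_sq R
  by_cases hR : frobNorm R = 0
  · rw [hR]; exact Dfun_nonneg R
  · have hpos : 0 < frobNorm R := lt_of_le_of_ne (frobNorm_nonneg _) (Ne.symm hR)
    nlinarith [Dfun_nonneg R, frobNorm_nonneg (tensorF r s)]

lemma best_Dfun_le_q_t
    (hb : ∀ (u : Fin p → ℝ) (v : Fin q → ℝ),
      frobNorm (R - tensorF r s) ≤ frobNorm (R - tensorF u v)) :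
    Dfun R ≤ (q : ℝ) * frobNorm (tensorF r s) := by
  have h1 := Dfun_le_sqrtq R
  have h2 := best_normsq_le hb
  have h3 : frobNorm R ^2 = frobInner R R := frobNorm_sq R
  have hq2 : Real.sqrt q ^ 2 = (q:ℝ) := Real.sq_sqrt (Nat.cast_nonneg q)
  by_cases hD : Dfun R = 0
  · rw [hD]
    exact mul_nonneg (Nat.cast_nonneg q) (frobNorm_nonneg _)
  · have hDpos : 0 < Dfun R := lt_of_le_of_ne (Dfun_nonneg _) (Ne.symm hD)
    nlinarith [frobNorm_nonneg R, Real.sqrt_nonneg (q:ℝ), frobNorm_nonneg (tensorF r s)]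

end Best2

/-! ### matrix product with tensors -/

lemma tensor_mul {n : ℕ} (a : Fin p → ℝ) (b : Fin n → ℝ) (X : Matrix (Fin n) (Fin q) ℝ) :
    tensorF a b * X = tensorF a (Xᵀ.mulVec b) := by
  ext i j
  simp only [Matrix.mul_apply, tensor_apply, Matrix.mulVec, dotProduct,
    Matrix.transpose_apply, Finset.mul_sum]
  congr 1; ext k; ring

lemma mul_tensor {n : ℕ} (X : Matrix (Fin p) (Fin n) ℝ) (a : Fin n → ℝ) (b : Fin q → ℝ) :
    X * tensorF a b = tensorF (X.mulVec a) b := by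
  ext i j
  simp only [Matrix.mul_apply, tensor_apply, Matrix.mulVec, dotProduct,
    Finset.sum_mul]
  congr 1; ext k; ring

lemma frobInner_conj (X : Matrix (Fin p) (Fin q) ℝ) (P : Matrix (Fin p) (Fin p) ℝ)
    (W : Matrix (Fin p) (Fin q) ℝ) (Q : Matrix (Fin q) (Fin q) ℝ) :
    frobInner X (P * W * Q) = frobInner (Pᵀ * X * Qᵀ) W := by
  unfold frobInner
  simp only [Matrix.transpose_mul, Matrix.transpose_transpose, Matrix.mul_assoc]
  rw [Matrix.trace_mul_comm Q (Xᵀ * (P * W)), Matrix.mul_assoc, Matrix.mul_assoc]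

/-! ### The deflation inequality -/

lemma Dfun_deflate {R : Matrix (Fin p) (Fin q) ℝ} {r : Fin p → ℝ} {s : Fin q → ℝ}
    (hb : ∀ (u : Fin p → ℝ) (v : Fin q → ℝ),
      frobNorm (R - tensorF r s) ≤ frobNorm (R - tensorF u v)) :
    Dfun (R - tensorF r s) ≤ Dfun R - frobNorm (tensorF r s) := by
  by_cases ht : frobNorm (tensorF r s) = 0
  · have hR0 : R = 0 := best_R_eq_zero hb ht
    have hz0 : tensorF r s = 0 := frobNorm_eq_zero ht
    rw [hR0, hz0]
    simp [Dfun_zero, frobNorm_zero]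
  · have htpos : 0 < frobNorm (tensorF r s) :=
      lt_of_le_of_ne (frobNorm_nonneg _) (Ne.symm ht)
    set ρ := ∑ i, (r i)^2 with hρ
    set σ := ∑ j, (s j)^2 with hσ
    set α := Real.sqrt ρ with hα
    set β := Real.sqrt σ with hβ
    have htαβ : frobNorm (tensorF r s) = α * β := frobNorm_tensor r s
    have hαnn : 0 ≤ α := Real.sqrt_nonneg _
    have hβnn : 0 ≤ β := Real.sqrt_nonneg _
    have hαpos : 0 < α := by
      rcases lt_or_eq_of_le hαnn with h | h
      · exact h
      · exfalso; rw [htαβ, ← h] at htpos; simp at htpos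
    have hβpos : 0 < β := by
      rcases lt_or_eq_of_le hβnn with h | h
      · exact h
      · exfalso; rw [htαβ, ← h] at htpos; simp at htpos
    have hρnn : 0 ≤ ρ := Finset.sum_nonneg fun i _ => sq_nonneg _
    have hσnn : 0 ≤ σ := Finset.sum_nonneg fun j _ => sq_nonneg _
    have hα2 : α^2 = ρ := Real.sq_sqrt hρnn
    have hβ2 : β^2 = σ := Real.sq_sqrt hσnn
    have hρpos : 0 < ρ := by rw [← hα2]; positivity
    have hσpos : 0 < σ := by rw [← hβ2]; positivity
    -- singular pair equations
    have hRs : R.mulVec s = σ • r := best_mulVec hb hσpos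
    have hbT : ∀ (u : Fin q → ℝ) (v : Fin p → ℝ),
        frobNorm (Rᵀ - tensorF s r) ≤ frobNorm (Rᵀ - tensorF u v) := by
      intro u v
      have h := hb v u
      calc frobNorm (Rᵀ - tensorF s r) = frobNorm ((R - tensorF r s)ᵀ) := by
            rw [Matrix.transpose_sub, tensor_transpose]
        _ = frobNorm (R - tensorF r s) := frobNorm_transpose _
        _ ≤ frobNorm (R - tensorF v u) := h
        _ = frobNorm ((R - tensorF v u)ᵀ) := (frobNorm_transpose _).symm
        _ = frobNorm (Rᵀ - tensorF u v) := by rw [Matrix.transpose_sub, tensor_transpose]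
    have hRtr : Rᵀ.mulVec r = ρ • s := best_mulVec hbT hρpos
    -- normalized singular vectors
    set u : Fin p → ℝ := α⁻¹ • r with hu
    set v : Fin q → ℝ := β⁻¹ • s with hv
    have hu1 : ∑ i, (u i)^2 = 1 := by
      rw [hu]
      have : ∀ i : Fin p, ((α⁻¹ • r) i)^2 = α⁻¹^2 * (r i)^2 := by
        intro i; simp [Pi.smul_apply, smul_eq_mul]; ring
      simp only [this, ← Finset.mul_sum, ← hρ, ← hα2]
      field_simp
    have hv1 : ∑ j, (v j)^2 = 1 := by
      rw [hv]
      have : ∀ j : Fin q, ((β⁻¹ • s) j)^2 = β⁻¹^2 * (s j)^2 := by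
        intro j; simp [Pi.smul_apply, smul_eq_mul]; ring
      simp only [this, ← Finset.mul_sum, ← hσ, ← hβ2]
      field_simp
    -- key values of mulVec
    have hRv : R.mulVec v = (β⁻¹ * σ) • r := by
      rw [hv, Matrix.mulVec_smul, hRs, smul_smul]
    have hRtu : Rᵀ.mulVec u = (α⁻¹ * ρ) • s := by
      rw [hu, Matrix.mulVec_smul, hRtr, smul_smul]
    set P : Matrix (Fin p) (Fin p) ℝ := 1 - tensorF u u with hP
    set Q : Matrix (Fin q) (Fin q) ℝ := 1 - tensorF v v with hQ
    have hPsymm : Pᵀ = P := by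
      rw [hP, Matrix.transpose_sub, Matrix.transpose_one, tensor_transpose]
    have hQsymm : Qᵀ = Q := by
      rw [hQ, Matrix.transpose_sub, Matrix.transpose_one, tensor_transpose]
    -- P * R * Q = R - z
    have hPR : P * R = R - tensorF r s := by
      rw [hP, Matrix.sub_mul, Matrix.one_mul, tensor_mul]
      congr 1
      rw [hRtu, tensor_smul_right, hu, tensor_smul_left, smul_smul]
      have : α⁻¹ * ρ * α⁻¹ = 1 := by
        rw [← hα2]; field_simp
      rw [this, one_smul]
    have hzv : (tensorF r s).mulVec v = (β⁻¹ * σ) • r := by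
      rw [tensor_mulVec]
      congr 1
      rw [hv]
      have : ∀ j : Fin q, s j * ((β⁻¹ • s) j) = β⁻¹ * (s j)^2 := by
        intro j; simp [Pi.smul_apply, smul_eq_mul]; ring
      simp only [this, ← Finset.mul_sum, ← hσ]
    have hRzv : (R - tensorF r s).mulVec v = 0 := by
      rw [Matrix.sub_mulVec, hRv, hzv, sub_self]
    have hRzQ : (R - tensorF r s) * Q = R - tensorF r s := by
      rw [hQ, Matrix.mul_sub, Matrix.mul_one, mul_tensor, hRzv, tensor_zero_left, sub_zero]
    have hPRQ : P * R * Q = R - tensorF r s := by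
      rw [hPR, hRzQ]
    -- value of ⟨R, u⊗v⟩
    have hfiuv : frobInner R (tensorF u v) = α * β := by
      rw [frobInner_tensor_right, hRv]
      have : ∀ i : Fin p, u i * ((β⁻¹ * σ) • r) i = (α⁻¹ * (β⁻¹ * σ)) * (r i)^2 := by
        intro i
        rw [hu]
        simp [Pi.smul_apply, smul_eq_mul]
        ring
      simp only [this, ← Finset.mul_sum, ← hρ]
      rw [← hα2, ← hβ2]
      field_simp
    -- now bound every admissible element
    apply Dfun_le
    intro W hW
    set W' := P * W * Q + tensorF u v with hW'
    have hadm : Adm W' := by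
      intro x
      set c := ∑ j, v j * x j with hc
      have hQx : Q.mulVec x = x - c • v := by
        rw [hQ, Matrix.sub_mulVec, Matrix.one_mulVec, tensor_mulVec, hc]
      set y0 := Q.mulVec x with hy0
      set y1 := W.mulVec y0 with hy1
      have hd : ∀ (y : Fin p → ℝ), P.mulVec y = y - (∑ i, u i * y i) • u := by
        intro y
        rw [hP, Matrix.sub_mulVec, Matrix.one_mulVec, tensor_mulVec]
      have hy0sq : ∑ j, (y0 j)^2 = (∑ j, (x j)^2) - c^2 := by
        rw [hQx]
        have : ∀ j : Fin q, ((x - c • v) j) = x j - c * v j := by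
          intro j; simp [Pi.sub_apply, Pi.smul_apply, smul_eq_mul]
        simp only [this]
        rw [sum_sq_sub, hv1, ← hc]
        ring
      have hy1sq : ∑ i, (y1 i)^2 ≤ ∑ j, (y0 j)^2 := hW y0
      set d := ∑ i, u i * y1 i with hdd
      have hy2 : P.mulVec y1 = y1 - d • u := hd y1
      have hy2sq : ∑ i, ((y1 - d • u) i)^2 = (∑ i, (y1 i)^2) - d^2 := by
        have : ∀ i : Fin p, ((y1 - d • u) i) = y1 i - d * u i := by
          intro i; simp [Pi.sub_apply, Pi.smul_apply, smul_eq_mul]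
        simp only [this]
        rw [sum_sq_sub, hu1, ← hdd]
        ring
      have hWx : W'.mulVec x = (y1 - d • u) + c • u := by
        rw [hW', Matrix.add_mulVec, tensor_mulVec, ← hc]
        congr 1
        rw [← Matrix.mulVec_mulVec, ← Matrix.mulVec_mulVec, ← hy0, ← hy1, hy2]
      rw [hWx]
      have hu_y2 : ∑ i, u i * ((y1 - d • u) i) = 0 := by
        have : ∀ i : Fin p, u i * ((y1 - d • u) i) = u i * y1 i - d * (u i)^2 := by
          intro i; simp [Pi.sub_apply, Pi.smul_apply, smul_eq_mul]; ring
        simp only [this, Finset.sum_sub_distrib, ← Finset.mul_sum, hu1, ← hdd]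
        ring
      have hfin : ∀ i : Fin p, (((y1 - d • u) + c • u) i) = (y1 - d • u) i + c * u i := by
        intro i; simp [Pi.add_apply, Pi.smul_apply, smul_eq_mul]
      simp only [hfin]
      rw [sum_sq_add, hu_y2, hu1, hy2sq]
      have hd2 : 0 ≤ d^2 := sq_nonneg d
      calc (∑ i, (y1 i)^2) - d^2 + 2*c*0 + c^2*1
          ≤ (∑ j, (y0 j)^2) + c^2 := by linarith
        _ = ∑ j, (x j)^2 := by rw [hy0sq]; ring
    -- the exchange identity
    have hfi : frobInner (R - tensorF r s) W = frobInner R W' - α * β := by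
      rw [hW', frobInner_add_right, frobInner_conj, hPsymm, hQsymm, hPRQ, hfiuv]
      ring
    have hle := le_Dfun (X := R) hadm
    rw [htαβ]
    linarith [hle, hfi]

/-! ### Atil lemmas -/

section AtilSec

variable {M : ℕ} (A : Fin M → Matrix (Fin p) (Fin p) ℝ) (B : Fin M → Matrix (Fin q) (Fin q) ℝ)

lemma Atil_add (X Y : Matrix (Fin p) (Fin q) ℝ) :
    Atil A B (X + Y) = Atil A B X + Atil A B Y := by
  unfold Atil
  rw [← Finset.sum_add_distrib]
  congr 1; ext μ
  rw [Matrix.mul_add, Matrix.add_mul]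

lemma Atil_sub (X Y : Matrix (Fin p) (Fin q) ℝ) :
    Atil A B (X - Y) = Atil A B X - Atil A B Y := by
  unfold Atil
  rw [← Finset.sum_sub_distrib]
  congr 1; ext μ
  rw [Matrix.mul_sub, Matrix.sub_mul]

lemma Atil_smul (c : ℝ) (X : Matrix (Fin p) (Fin q) ℝ) :
    Atil A B (c • X) = c • Atil A B X := by
  unfold Atil
  rw [Finset.smul_sum]
  congr 1; ext μ
  rw [Matrix.mul_smul, Matrix.smul_mul]

lemma Atil_tensor (a : Fin p → ℝ) (b : Fin q → ℝ) (μ : Fin M) :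
    A μ * tensorF a b * (B μ)ᵀ = tensorF ((A μ).mulVec a) ((B μ).mulVec b) := by
  rw [mul_tensor, tensor_mul, Matrix.transpose_transpose]

lemma frobNorm_Atil_le {κ : ℝ}
    (hκ : ∀ (μ : Fin M) (g : Matrix (Fin p) (Fin q) ℝ),
      frobNorm (A μ * g * (B μ)ᵀ) ≤ κ * frobNorm g)
    (g : Matrix (Fin p) (Fin q) ℝ) :
    frobNorm (Atil A B g) ≤ (M:ℝ) * κ * frobNorm g := by
  calc frobNorm (Atil A B g) ≤ ∑ μ, frobNorm (A μ * g * (B μ)ᵀ) :=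
        frobNorm_finset_sum_le _ _
    _ ≤ ∑ _μ : Fin M, κ * frobNorm g := Finset.sum_le_sum fun μ _ => hκ μ g
    _ = (M:ℝ) * κ * frobNorm g := by
        rw [Finset.sum_const, Finset.card_univ, Fintype.card_fin, nsmul_eq_mul]
        ring

lemma Dfun_Atil_tensor_le {κ : ℝ}
    (hκ : ∀ (μ : Fin M) (g : Matrix (Fin p) (Fin q) ℝ),
      frobNorm (A μ * g * (B μ)ᵀ) ≤ κ * frobNorm g)
    (a : Fin p → ℝ) (b : Fin q → ℝ) :
    Dfun (Atil A B (tensorF a b)) ≤ (M:ℝ) * κ * frobNorm (tensorF a b) := by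
  calc Dfun (Atil A B (tensorF a b)) ≤ ∑ μ, Dfun (A μ * tensorF a b * (B μ)ᵀ) :=
        Dfun_finset_sum_le _ _
    _ ≤ ∑ _μ : Fin M, κ * frobNorm (tensorF a b) := by
        apply Finset.sum_le_sum
        intro μ _
        calc Dfun (A μ * tensorF a b * (B μ)ᵀ)
            = Dfun (tensorF ((A μ).mulVec a) ((B μ).mulVec b)) := by rw [Atil_tensor]
          _ ≤ frobNorm (tensorF ((A μ).mulVec a) ((B μ).mulVec b)) := Dfun_tensor_le _ _
          _ = frobNorm (A μ * tensorF a b * (B μ)ᵀ) := by rw [← Atil_tensor]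
          _ ≤ κ * frobNorm (tensorF a b) := hκ μ _
    _ = (M:ℝ) * κ * frobNorm (tensorF a b) := by
        rw [Finset.sum_const, Finset.card_univ, Fintype.card_fin, nsmul_eq_mul]
        ring

end AtilSec

end PGD

/-- Convergence of the fixed-point PGD algorithm (case (A1), discretized setting):
if `3Mκ < 1`, there is a unique `f⋆` with `f⋆ + Ã(f⋆) = b`, and every fixed-point
PGD sequence converges to it in the Frobenius norm. -/
theorem stmt_13 {p q M : ℕ} (hp : 1 ≤ p) (hq : 1 ≤ q) (hM : 1 ≤ M)
    (A : Fin M → Matrix (Fin p) (Fin p) ℝ) (B : Fin M → Matrix (Fin q) (Fin q) ℝ)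
    (κ : ℝ) (hκ0 : 0 ≤ κ)
    (hκ : ∀ (μ : Fin M) (g : Matrix (Fin p) (Fin q) ℝ),
      frobNorm (A μ * g * (B μ)ᵀ) ≤ κ * frobNorm g)
    (hcond : 3 * M * κ < 1)
    (b g₀ : Matrix (Fin p) (Fin q) ℝ)
    (f : ℕ → Matrix (Fin p) (Fin q) ℝ)
    (r : ℕ → EuclideanSpace ℝ (Fin p)) (s : ℕ → EuclideanSpace ℝ (Fin q))
    (hf0 : f 0 = g₀)
    (hstep : ∀ n, f (n + 1) = f n + tensor (r n) (s n))
    (hbest : ∀ (n : ℕ) (u : EuclideanSpace ℝ (Fin p)) (v : EuclideanSpace ℝ (Fin q)),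
      frobNorm ((b - f n - Atil A B (f n)) - tensor (r n) (s n))
        ≤ frobNorm ((b - f n - Atil A B (f n)) - tensor u v)) :
    (∃! fstar : Matrix (Fin p) (Fin q) ℝ, fstar + Atil A B fstar = b) ∧
    (∀ fstar : Matrix (Fin p) (Fin q) ℝ, fstar + Atil A B fstar = b →
      Tendsto (fun n => frobNorm (f n - fstar)) atTop (𝓝 0)) := by
  classical
  have hM1 : (1:ℝ) ≤ (M:ℝ) := by exact_mod_cast hM
  have hδ0 : (0:ℝ) ≤ (M:ℝ) * κ := by positivity
  have hδ1 : (M:ℝ) * κ < 1 := by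
    have h3 : 3 * (M:ℝ) * κ < 1 := by exact_mod_cast hcond
    nlinarith
  -- the linear map g ↦ g + Ã g
  let L : Matrix (Fin p) (Fin q) ℝ →ₗ[ℝ] Matrix (Fin p) (Fin q) ℝ :=
    { toFun := fun g => g + Atil A B g
      map_add' := by
        intro X Y
        show (X + Y) + Atil A B (X + Y) = (X + Atil A B X) + (Y + Atil A B Y)
        rw [PGD.Atil_add]
        abel
      map_smul' := by
        intro c X
        show (c • X) + Atil A B (c • X) = (RingHom.id ℝ) c • (X + Atil A B X)
        rw [PGD.Atil_smul, smul_add]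
        simp }
  have hLapp : ∀ g, L g = g + Atil A B g := fun g => rfl
  have hLinj : Function.Injective L := by
    intro g₁ g₂ hg
    have h0 : (g₁ - g₂) + Atil A B (g₁ - g₂) = 0 := by
      have hL0 : L (g₁ - g₂) = 0 := by rw [map_sub, hg, sub_self]
      rw [← hLapp]
      exact hL0
    set g := g₁ - g₂ with hgdef
    have hg2 : g = -(Atil A B g) := eq_neg_of_add_eq_zero_left h0
    have hnorm : frobNorm g ≤ (M:ℝ) * κ * frobNorm g := by
      calc frobNorm g = frobNorm (-(Atil A B g)) := by rw [← hg2]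
        _ = frobNorm (Atil A B g) := PGD.frobNorm_neg _
        _ ≤ (M:ℝ) * κ * frobNorm g := PGD.frobNorm_Atil_le A B hκ g
    have hzero : frobNorm g = 0 := by nlinarith [PGD.frobNorm_nonneg g]
    have := PGD.frobNorm_eq_zero hzero
    exact sub_eq_zero.1 this
  have hLsurj : Function.Surjective L := LinearMap.injective_iff_surjective.1 hLinj
  obtain ⟨fs, hfs⟩ := hLsurj b
  have hfs' : fs + Atil A B fs = b := by rw [← hLapp]; exact hfs
  constructor
  · refine ⟨fs, hfs', fun y hy => ?_⟩
    apply hLinj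
    rw [hLapp, hLapp, hy, hfs']
  · intro fstar hfstar
    set R : ℕ → Matrix (Fin p) (Fin q) ℝ := fun n => b - f n - Atil A B (f n) with hR
    have hbn : ∀ n, ∀ (u : Fin p → ℝ) (v : Fin q → ℝ),
        frobNorm (R n - PGD.tensorF (r n).ofLp (s n).ofLp) ≤ frobNorm (R n - PGD.tensorF u v) :=
      fun n u v => hbest n (WithLp.toLp 2 u) (WithLp.toLp 2 v)
    have hrec : ∀ n, R (n+1)
        = (R n - tensor (r n) (s n)) + (-(Atil A B (tensor (r n) (s n)))) := by
      intro n
      show b - f (n+1) - Atil A B (f (n+1)) = _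
      rw [hstep n, PGD.Atil_add]
      show b - (f n + tensor (r n) (s n)) - (Atil A B (f n) + Atil A B (tensor (r n) (s n)))
        = (b - f n - Atil A B (f n) - tensor (r n) (s n)) + _
      abel
    have hq1 : (1:ℝ) ≤ (q:ℝ) := by exact_mod_cast hq
    have hqpos : (0:ℝ) < (q:ℝ) := by linarith
    set γ : ℝ := 1 - (1 - (M:ℝ)*κ)/(q:ℝ) with hγ
    have hγ0 : 0 ≤ γ := by
      have hle : (1 - (M:ℝ)*κ)/(q:ℝ) ≤ 1 := by
        rw [div_le_one hqpos]
        linarith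
      rw [hγ]
      linarith
    have hγ1 : γ < 1 := by
      have hpos : 0 < (1 - (M:ℝ)*κ)/(q:ℝ) := div_pos (by linarith) hqpos
      rw [hγ]
      linarith
    have hstep2 : ∀ n, PGD.Dfun (R (n+1)) ≤ γ * PGD.Dfun (R n) := by
      intro n
      have h1 : PGD.Dfun (R (n+1)) ≤ PGD.Dfun (R n - tensor (r n) (s n))
          + PGD.Dfun (-(Atil A B (tensor (r n) (s n)))) := by
        rw [hrec n]
        exact PGD.Dfun_add_le _ _
      have h2 : PGD.Dfun (R n - tensor (r n) (s n))
          ≤ PGD.Dfun (R n) - frobNorm (tensor (r n) (s n)) := PGD.Dfun_deflate (hbn n)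
      have h3 : PGD.Dfun (-(Atil A B (tensor (r n) (s n))))
          ≤ PGD.Dfun (Atil A B (tensor (r n) (s n))) := PGD.Dfun_neg_le _
      have h4 : PGD.Dfun (Atil A B (tensor (r n) (s n)))
          ≤ (M:ℝ) * κ * frobNorm (tensor (r n) (s n)) :=
        PGD.Dfun_Atil_tensor_le A B hκ (r n).ofLp (s n).ofLp
      have h5 : PGD.Dfun (R n) ≤ (q:ℝ) * frobNorm (tensor (r n) (s n)) :=
        PGD.best_Dfun_le_q_t (hbn n)
      have htn0 : 0 ≤ frobNorm (tensor (r n) (s n)) := PGD.frobNorm_nonneg _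
      have h6 : (1 - (M:ℝ)*κ)/(q:ℝ) * PGD.Dfun (R n)
          ≤ (1 - (M:ℝ)*κ) * frobNorm (tensor (r n) (s n)) := by
        rw [div_mul_eq_mul_div, div_le_iff₀ hqpos]
        calc (1 - (M:ℝ)*κ) * PGD.Dfun (R n)
            ≤ (1 - (M:ℝ)*κ) * ((q:ℝ) * frobNorm (tensor (r n) (s n))) :=
              mul_le_mul_of_nonneg_left h5 (by linarith)
          _ = (1 - (M:ℝ)*κ) * frobNorm (tensor (r n) (s n)) * (q:ℝ) := by ring
      calc PGD.Dfun (R (n+1)) ≤ PGD.Dfun (R n) - (1 - (M:ℝ)*κ) * frobNorm (tensor (r n) (s n)) := by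
            nlinarith
        _ ≤ PGD.Dfun (R n) - (1 - (M:ℝ)*κ)/(q:ℝ) * PGD.Dfun (R n) := by linarith
        _ = γ * PGD.Dfun (R n) := by rw [hγ]; ring
    have hgeo : ∀ n, PGD.Dfun (R n) ≤ γ^n * PGD.Dfun (R 0) := by
      intro n
      induction n with
      | zero => simp
      | succ n ih =>
          calc PGD.Dfun (R (n+1)) ≤ γ * PGD.Dfun (R n) := hstep2 n
            _ ≤ γ * (γ^n * PGD.Dfun (R 0)) := mul_le_mul_of_nonneg_left ih hγ0
            _ = γ^(n+1) * PGD.Dfun (R 0) := by ring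
    have hfb : ∀ n, frobNorm (f n - fstar) ≤ (γ^n * PGD.Dfun (R 0)) / (1 - (M:ℝ)*κ) := by
      intro n
      have hRe : R n = -((f n - fstar) + Atil A B (f n - fstar)) := by
        show b - f n - Atil A B (f n) = _
        rw [show b = fstar + Atil A B fstar from hfstar.symm, PGD.Atil_sub]
        abel
      have h1 : frobNorm (R n) = frobNorm ((f n - fstar) + Atil A B (f n - fstar)) := by
        rw [hRe, PGD.frobNorm_neg]
      have h2 : frobNorm (f n - fstar)
          ≤ frobNorm ((f n - fstar) + Atil A B (f n - fstar))
            + frobNorm (Atil A B (f n - fstar)) := by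
        have he : f n - fstar
            = ((f n - fstar) + Atil A B (f n - fstar)) + (-(Atil A B (f n - fstar))) := by
          abel
        calc frobNorm (f n - fstar)
            = frobNorm (((f n - fstar) + Atil A B (f n - fstar))
              + (-(Atil A B (f n - fstar)))) := by rw [← he]
          _ ≤ frobNorm ((f n - fstar) + Atil A B (f n - fstar))
              + frobNorm (-(Atil A B (f n - fstar))) := PGD.frobNorm_add_le _ _
          _ = _ := by rw [PGD.frobNorm_neg]
      have h3 : frobNorm (Atil A B (f n - fstar)) ≤ (M:ℝ)*κ * frobNorm (f n - fstar) :=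
        PGD.frobNorm_Atil_le A B hκ _
      have h4 : frobNorm (R n) ≤ PGD.Dfun (R n) := PGD.best_norm_le_Dfun (hbn n)
      have h5 := hgeo n
      have hpos : (0:ℝ) < 1 - (M:ℝ)*κ := by linarith
      rw [le_div_iff₀ hpos]
      have hexp : frobNorm (f n - fstar) * (1 - (M:ℝ)*κ)
          = frobNorm (f n - fstar) - (M:ℝ)*κ * frobNorm (f n - fstar) := by ring
      rw [hexp]
      linarith
    have htend : Tendsto (fun n => (γ^n * PGD.Dfun (R 0)) / (1 - (M:ℝ)*κ)) atTop (𝓝 0) := by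
      have h := tendsto_pow_atTop_nhds_zero_of_lt_one hγ0 hγ1
      have h2 := (h.mul_const (PGD.Dfun (R 0))).div_const (1 - (M:ℝ)*κ)
      simpa using h2
    exact squeeze_zero (fun n => PGD.frobNorm_nonneg _) hfb htend

end
end
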